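/- arXiv:1112.2540 — 6 statements merged into one kernel-verified Lean document; each statement's English description precedes it below -/
import Mathlib

section
/- For α ∈ (0,1) and k ∈ ℕ with sin(πk·α) ≠ 0, the function f(y) = sin(yα)·sin(y(1-α))/sin(y) is strictly increasing on the interval (πk, π(k+1)). -/
open Real

lemma sin_ne_zero_of_mem_Ioo (k : ℕ) {y : ℝ}
    (hy : y ∈ Set.Ioo (Real.pi * k) (Real.pi * (k + 1))) : Real.sin y ≠ 0 := by
  rw [Real.sin_ne_zero_iff]
  intro n hn
  have hpi := Real.pi_pos
  obtain ⟨h1, h2⟩ := hy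
  rw [← hn] at h1 h2
  have hk1 : (k : ℝ) < n := by
    have := (mul_lt_mul_iff_right₀ hpi).mp (by linarith [h1] : Real.pi * k < Real.pi * n)
    exact this
  have hk2 : (n : ℝ) < (k : ℝ) + 1 := by
    have := (mul_lt_mul_iff_right₀ hpi).mp (by linarith [h2] : Real.pi * n < Real.pi * (k + 1))
    exact this
  have hk1' : (k : ℤ) < n := by exact_mod_cast hk1
  have hk2' : (n : ℤ) < (k : ℤ) + 1 := by exact_mod_cast hk2
  omega

theorem strictMonoOn_f
    (α : ℝ) (hα : α ∈ Set.Ioo (0:ℝ) 1) (k : ℕ) (hk : 1 ≤ k)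
    (hsin : Real.sin (Real.pi * k * α) ≠ 0) :
    StrictMonoOn (fun y => Real.sin (y * α) * Real.sin (y * (1 - α)) / Real.sin y)
      (Set.Ioo (Real.pi * k) (Real.pi * (k + 1))) := by
  obtain ⟨hα0, hα1⟩ := hα
  apply strictMonoOn_of_deriv_pos (convex_Ioo _ _)
  · apply ContinuousOn.div
    · exact (Continuous.mul (by continuity) (by continuity)).continuousOn
    · exact Real.continuous_sin.continuousOn
    · intro y hy; exact sin_ne_zero_of_mem_Ioo k hy
  · intro y hy
    rw [interior_Ioo] at hy
    have hs : Real.sin y ≠ 0 := sin_ne_zero_of_mem_Ioo k hy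
    have h1 : HasDerivAt (fun y : ℝ => Real.sin (y * α)) (Real.cos (y * α) * α) y :=
      by simpa [Function.comp_def] using (Real.hasDerivAt_sin (y * α)).comp y ((hasDerivAt_id y).mul_const α)
    have h2 : HasDerivAt (fun y : ℝ => Real.sin (y * (1 - α)))
        (Real.cos (y * (1 - α)) * (1 - α)) y :=
      by simpa [Function.comp_def] using
        (Real.hasDerivAt_sin (y * (1 - α))).comp y ((hasDerivAt_id y).mul_const (1 - α))
    have h3 : HasDerivAt Real.sin (Real.cos y) y := Real.hasDerivAt_sin y
    have hD : HasDerivAt (fun y => Real.sin (y * α) * Real.sin (y * (1 - α)) / Real.sin y)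
        (((Real.cos (y * α) * α * Real.sin (y * (1 - α)) +
            Real.sin (y * α) * (Real.cos (y * (1 - α)) * (1 - α))) * Real.sin y -
          Real.sin (y * α) * Real.sin (y * (1 - α)) * Real.cos y) / Real.sin y ^ 2) y :=
      (h1.mul h2).div h3 hs
    rw [hD.deriv]
    apply div_pos _ (by positivity)
    have hysum : y = y * α + y * (1 - α) := by ring
    have hss : Real.sin y = Real.sin (y * α) * Real.cos (y * (1 - α)) +
        Real.cos (y * α) * Real.sin (y * (1 - α)) := by
      conv_lhs => rw [hysum]
      exact Real.sin_add _ _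
    have hcc : Real.cos y = Real.cos (y * α) * Real.cos (y * (1 - α)) -
        Real.sin (y * α) * Real.sin (y * (1 - α)) := by
      conv_lhs => rw [hysum]
      exact Real.cos_add _ _
    set a := Real.sin (y * α)
    set b := Real.cos (y * α)
    set c := Real.sin (y * (1 - α))
    set d := Real.cos (y * (1 - α))
    have hspos : 0 < (a * d + b * c) ^ 2 := by
      rw [← hss]; positivity
    rw [hss, hcc]
    have key : (b * α * c + a * (d * (1 - α))) * (a * d + b * c) -
        a * c * (b * d - a * c) =
        α * (b * c) ^ 2 + (1 - α) * (a * d) ^ 2 + (a * c) ^ 2 := by ring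
    rw [key]
    nlinarith [sq_nonneg (a * d - b * c), sq_nonneg (a * d + b * c), sq_nonneg (a * c),
      mul_pos hα0 (sub_pos.mpr hα1), sq_nonneg (a * d), sq_nonneg (b * c),
      mul_pos (mul_pos hα0 (sub_pos.mpr hα1)) hspos,
      mul_nonneg hα0.le (sq_nonneg (b * c)),
      mul_nonneg (sub_pos.mpr hα1).le (sq_nonneg (a * d))]
end

section
/- Let α ∈ (0,1), β > 0, and k ∈ ℕ with sin(πkα) ≠ 0. Then the equation -y/β = sin(yα)sin(y(1-α))/sin(y) has exactly one solution y* in the open interval (πk, π(k+1)). -/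
open Real Set Filter Topology

lemma aux_cos_nat_pi (n : ℕ) : Real.cos ((n:ℝ) * π) = (-1:ℝ)^n := by
  simpa using Real.cos_nat_mul_pi_sub 0 n

lemma aux_sign_sin (n : ℤ) {x : ℝ} (h1 : (n:ℝ) * π < x) (h2 : x < ((n:ℝ)+1) * π) :
    0 < (-1:ℝ)^n * Real.sin x := by
  have hx : Real.sin x = (-1:ℝ)^n * Real.sin (x - n*π) := by
    have : Real.sin ((x - n*π) + n*π) = (-1:ℝ)^n * Real.sin (x - n*π) :=
      Real.sin_add_int_mul_pi _ n
    simpa using this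
  have hpos : 0 < Real.sin (x - n*π) :=
    Real.sin_pos_of_pos_of_lt_pi (by linarith) (by linarith)
  have hsq : (-1:ℝ)^n * (-1:ℝ)^n = 1 := by
    rw [← zpow_add₀ (by norm_num : (-1:ℝ) ≠ 0)]
    have : n + n = 2 * n := by ring
    rw [this, zpow_mul]; norm_num
  rw [hx, ← mul_assoc, hsq, one_mul]; exact hpos

lemma aux_neg_one_zpow_pred (n : ℤ) : (-1:ℝ)^(n-1) * (-1:ℝ)^n = -1 := by
  rw [← zpow_add₀ (by norm_num : (-1:ℝ) ≠ 0)]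
  have : n - 1 + n = 2*n - 1 := by ring
  rw [this, zpow_sub₀ (by norm_num : (-1:ℝ) ≠ 0), zpow_mul]; norm_num

lemma aux_zero_char (α : ℝ) (hα0 : 0 < α) (k : ℕ) {y : ℝ}
    (hy : y ∈ Ioo (π*k) (π*(k+1))) (h : Real.sin (y*α) = 0) :
    ∃ m : ℤ, y*α = m*π ∧ (k:ℝ)*α < m ∧ (m:ℝ) < ((k:ℝ)+1)*α := by
  obtain ⟨m, hm⟩ := Real.sin_eq_zero_iff.mp h
  have hπ := Real.pi_pos
  obtain ⟨hy1, hy2⟩ := hy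
  refine ⟨m, hm.symm, ?_, ?_⟩
  · have h1 : π*k*α < y*α := by nlinarith
    rw [← hm] at h1
    nlinarith
  · have h1 : y*α < π*(k+1)*α := by nlinarith
    rw [← hm] at h1
    nlinarith

lemma aux_mixed (α : ℝ) (hα0 : 0 < α) (hα1 : α < 1) (k : ℕ) {y z : ℝ}
    (hy : y ∈ Ioo (π*k) (π*(k+1))) (hz : z ∈ Ioo (π*k) (π*(k+1)))
    (h1 : Real.sin (y*α) = 0) (h2 : Real.sin (z*(1-α)) = 0) : False := by
  obtain ⟨m, _, hm1, hm2⟩ := aux_zero_char α hα0 k hy h1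
  obtain ⟨n, _, hn1, hn2⟩ := aux_zero_char (1-α) (by linarith) k hz h2
  have c1 : (k:ℝ) < (m:ℝ) + n := by nlinarith
  have c2 : (m:ℝ) + (n:ℝ) < (k:ℝ) + 1 := by nlinarith
  have d1 : (k:ℤ) < m + n := by exact_mod_cast c1
  have d2 : m + n < (k:ℤ) + 1 := by exact_mod_cast c2
  omega

lemma aux_same (α : ℝ) (hα0 : 0 < α) (hα1 : α < 1) (k : ℕ) {y z : ℝ}
    (hy : y ∈ Ioo (π*k) (π*(k+1))) (hz : z ∈ Ioo (π*k) (π*(k+1)))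
    (h1 : Real.sin (y*α) = 0) (h2 : Real.sin (z*α) = 0) : y = z := by
  obtain ⟨m, hme, hm1, hm2⟩ := aux_zero_char α hα0 k hy h1
  obtain ⟨n, hne, hn1, hn2⟩ := aux_zero_char α hα0 k hz h2
  have : m = n := by
    have c1 : (m:ℝ) - n < 1 := by nlinarith
    have c2 : (n:ℝ) - m < 1 := by nlinarith
    have d1 : m - n < 1 := by exact_mod_cast c1
    have d2 : n - m < 1 := by exact_mod_cast c2
    omega
  subst this
  have := Real.pi_pos
  have : y * α = z * α := by rw [hme, hne]
  exact mul_right_cancel₀ (ne_of_gt hα0) this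

lemma aux_key (α : ℝ) (hα0 : 0 < α) (hα1 : α < 1) (k : ℕ)
    {y₁ y₂ c : ℝ} (h1 : y₁ ∈ Ioo (π*k) (π*(k+1))) (h2 : y₂ ∈ Ioo (π*k) (π*(k+1)))
    (hc1 : y₁ < c) (hc2 : c < y₂) (hzc : Real.sin (c*α) = 0)
    (hs1 : (-1:ℝ)^k * (Real.sin (y₁*α) * Real.sin (y₁*(1-α))) < 0)
    (hs2 : (-1:ℝ)^k * (Real.sin (y₂*α) * Real.sin (y₂*(1-α))) < 0) : False := by
  have hπ := Real.pi_pos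
  obtain ⟨ha1, ha2⟩ := h1
  obtain ⟨hb1, hb2⟩ := h2
  have hcI : c ∈ Ioo (π*k) (π*(k+1)) := ⟨lt_trans ha1 hc1, lt_trans hc2 hb2⟩
  obtain ⟨m, hme, hm1, hm2⟩ := aux_zero_char α hα0 k hcI hzc
  -- the factor sin (y*(1-α)) does not vanish on the interval
  have htne : ∀ z ∈ Ioo (π*k) (π*(k+1)), Real.sin (z*(1-α)) ≠ 0 := fun z hz h =>
    aux_mixed α hα0 hα1 k hcI hz hzc h
  set t₁ := Real.sin (y₁*(1-α)) with ht₁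
  set t₂ := Real.sin (y₂*(1-α)) with ht₂
  -- t₁ and t₂ have the same sign
  have htt : 0 < t₁ * t₂ := by
    rcases lt_trichotomy (t₁ * t₂) 0 with h | h | h
    · exfalso
      have hcont : ContinuousOn (fun y => Real.sin (y*(1-α))) (Icc y₁ y₂) := by fun_prop
      have hne1 : t₁ ≠ 0 := htne y₁ ⟨ha1, ha2⟩
      have hne2 : t₂ ≠ 0 := htne y₂ ⟨hb1, hb2⟩
      have hy12 : y₁ ≤ y₂ := le_of_lt (lt_trans hc1 hc2)
      rcases mul_neg_iff.mp h with ⟨hp, hn⟩ | ⟨hn, hp⟩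
      -- case1: 0 < t₁, t₂ < 0
      · obtain ⟨z, hzmem, hz0⟩ := intermediate_value_Ioo' hy12 hcont
          (⟨hn, hp⟩ : (0:ℝ) ∈ Ioo t₂ t₁)
        exact htne z ⟨lt_trans ha1 hzmem.1, lt_trans hzmem.2 hb2⟩ hz0
      · obtain ⟨z, hzmem, hz0⟩ := intermediate_value_Ioo hy12 hcont
          (⟨hn, hp⟩ : (0:ℝ) ∈ Ioo t₁ t₂)
        exact htne z ⟨lt_trans ha1 hzmem.1, lt_trans hzmem.2 hb2⟩ hz0
    · exfalso
      rcases mul_eq_zero.mp h with h | h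
      · exact htne y₁ ⟨ha1, ha2⟩ h
      · exact htne y₂ ⟨hb1, hb2⟩ h
    · exact h
  -- signs of sin (y₁ α), sin (y₂ α)
  set s₁ := Real.sin (y₁*α) with hs₁
  set s₂ := Real.sin (y₂*α) with hs₂
  have hgap : π * (k+1) - π * k = π := by ring
  have hA : 0 < (-1:ℝ)^(m-1) * s₁ := by
    apply aux_sign_sin (m-1)
    · push_cast; nlinarith
    · push_cast; nlinarith
  have hB : 0 < (-1:ℝ)^m * s₂ := by
    apply aux_sign_sin m
    · nlinarith
    · nlinarith
  have hss : s₁ * s₂ < 0 := by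
    have hprod := mul_pos hA hB
    have hE := aux_neg_one_zpow_pred m
    nlinarith [hprod, hE]
  -- final contradiction
  have hkk : (-1:ℝ)^k * (-1:ℝ)^k = 1 := by
    rw [← pow_add, ← two_mul, pow_mul]; norm_num
  have hPP : 0 < (s₁*t₁) * (s₂*t₂) := by
    have h := mul_pos_of_neg_of_neg hs1 hs2
    nlinarith [h, hkk]
  nlinarith [hPP, mul_neg_of_neg_of_pos hss htt]

theorem exists_unique_root_case2
    (α β : ℝ) (hα : α ∈ Set.Ioo (0:ℝ) 1) (hβ : 0 < β) (k : ℕ) (hk : 1 ≤ k)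
    (hsin : Real.sin (Real.pi * k * α) ≠ 0) :
    ∃! y : ℝ, y ∈ Set.Ioo (Real.pi * k) (Real.pi * (k + 1)) ∧
      -y / β = Real.sin (y * α) * Real.sin (y * (1 - α)) / Real.sin y := by
  obtain ⟨hα0, hα1⟩ := hα
  have hπ := Real.pi_pos
  have hk1 : (1:ℝ) ≤ (k:ℝ) := by exact_mod_cast hk
  have ha0 : 0 < π * k := by nlinarith
  have hab : π * (k:ℝ) < π * ((k:ℝ) + 1) := by nlinarith
  -- sign of sin on the interval
  have hsinpos : ∀ y ∈ Ioo (π * (k:ℝ)) (π * ((k:ℝ)+1)), 0 < (-1:ℝ)^k * Real.sin y := by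
    intro y hy
    have h := aux_sign_sin (k:ℤ) (x := y) (by push_cast; linarith [hy.1]) (by push_cast; linarith [hy.2])
    simpa using h
  have hsinne : ∀ y ∈ Ioo (π * (k:ℝ)) (π * ((k:ℝ)+1)), Real.sin y ≠ 0 := by
    intro y hy h
    have := hsinpos y hy
    rw [h, mul_zero] at this
    exact lt_irrefl 0 this
  -- equivalence with H y = 0
  have hequiv : ∀ y ∈ Ioo (π * (k:ℝ)) (π * ((k:ℝ)+1)),
      (-y / β = Real.sin (y * α) * Real.sin (y * (1 - α)) / Real.sin y ↔
        y * Real.sin y + β * (Real.sin (y*α) * Real.sin (y*(1-α))) = 0) := by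
    intro y hy
    rw [div_eq_div_iff (ne_of_gt hβ) (hsinne y hy)]
    constructor
    · intro h; linear_combination -h
    · intro h; linear_combination -h
  -- endpoint values
  have hsa : Real.sin (π * (k:ℝ)) = 0 := by rw [mul_comm]; exact Real.sin_nat_mul_pi k
  have hcosa : Real.cos (π * (k:ℝ)) = (-1:ℝ)^k := by rw [mul_comm]; exact aux_cos_nat_pi k
  have hcastb : π * ((k:ℝ)+1) = ((k+1:ℕ):ℝ) * π := by push_cast; ring
  have hsb : Real.sin (π * ((k:ℝ)+1)) = 0 := by rw [hcastb]; exact Real.sin_nat_mul_pi (k+1)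
  have hcosb : Real.cos (π * ((k:ℝ)+1)) = (-1:ℝ)^(k+1) := by rw [hcastb]; exact aux_cos_nat_pi (k+1)
  have hkk : (-1:ℝ)^k * (-1:ℝ)^k = 1 := by
    rw [← pow_add, ← two_mul, pow_mul]; norm_num
  have hkk' : (-1:ℝ)^k * (-1:ℝ)^(k+1) = -1 := by
    rw [← pow_add]
    have : k + (k+1) = 2*k + 1 := by ring
    rw [this, pow_succ, pow_mul]; norm_num
  have hsa1α : Real.sin (π * (k:ℝ) * (1-α)) = -((-1:ℝ)^k * Real.sin (π * (k:ℝ) * α)) := by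
    have e : π * (k:ℝ) * (1-α) = π * (k:ℝ) - π * (k:ℝ) * α := by ring
    rw [e, Real.sin_sub, hsa, hcosa]; ring
  have hsb1α : Real.sin (π * ((k:ℝ)+1) * (1-α)) = -((-1:ℝ)^(k+1) * Real.sin (π * ((k:ℝ)+1) * α)) := by
    have e : π * ((k:ℝ)+1) * (1-α) = π * ((k:ℝ)+1) - π * ((k:ℝ)+1) * α := by ring
    rw [e, Real.sin_sub, hsb, hcosb]; ring
  set h : ℝ → ℝ := fun y => (-1:ℝ)^k * (y * Real.sin y + β * (Real.sin (y*α) * Real.sin (y*(1-α)))) with hhdef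
  have hcont : Continuous h := by fun_prop
  have hHa : h (π * (k:ℝ)) < 0 := by
    have hs2 : 0 < Real.sin (π * (k:ℝ) * α)^2 := pow_two_pos_of_ne_zero hsin
    have e : h (π * (k:ℝ)) = -(β * Real.sin (π * (k:ℝ) * α)^2) := by
      simp only [hhdef]
      rw [hsa, hsa1α]
      linear_combination (-(β * Real.sin (π * (k:ℝ) * α)^2)) * hkk
    rw [e]
    have := mul_pos hβ hs2
    linarith
  -- existence of a root of H in the open interval
  have hroot : ∃ c ∈ Ioo (π * (k:ℝ)) (π * ((k:ℝ)+1)),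
      c * Real.sin c + β * (Real.sin (c*α) * Real.sin (c*(1-α))) = 0 := by
    have hne : ((-1:ℝ)^k) ≠ 0 := by positivity
    by_cases hbα : Real.sin (π * ((k:ℝ)+1) * α) = 0
    · -- degenerate endpoint: use derivative argument
      have hsb1α0 : Real.sin (π * ((k:ℝ)+1) * (1-α)) = 0 := by rw [hsb1α, hbα]; ring
      have hb0 : h (π * ((k:ℝ)+1)) = 0 := by
        simp [hhdef, hsb, hbα]
      set b := π * ((k:ℝ)+1) with hbdef
      have dsa : HasDerivAt (fun y:ℝ => Real.sin (y*α)) (Real.cos (b*α) * α) b :=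
        by have := (Real.hasDerivAt_sin (b*α)).comp b (hasDerivAt_mul_const α); exact this
      have dsb' : HasDerivAt (fun y:ℝ => Real.sin (y*(1-α))) (Real.cos (b*(1-α)) * (1-α)) b :=
        by have := (Real.hasDerivAt_sin (b*(1-α))).comp b (hasDerivAt_mul_const (1-α)); exact this
      have d1 : HasDerivAt (fun y:ℝ => y * Real.sin y) (1 * Real.sin b + b * Real.cos b) b :=
        (hasDerivAt_id b).mul (Real.hasDerivAt_sin b)
      have dP : HasDerivAt (fun y:ℝ => Real.sin (y*α) * Real.sin (y*(1-α)))
          (Real.cos (b*α) * α * Real.sin (b*(1-α)) + Real.sin (b*α) * (Real.cos (b*(1-α)) * (1-α))) b :=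
        dsa.mul dsb'
      have dH : HasDerivAt h ((-1:ℝ)^k * ((1 * Real.sin b + b * Real.cos b) +
          β * (Real.cos (b*α) * α * Real.sin (b*(1-α)) + Real.sin (b*α) * (Real.cos (b*(1-α)) * (1-α))))) b :=
        (d1.add (dP.const_mul β)).const_mul _
      have ev : (-1:ℝ)^k * ((1 * Real.sin b + b * Real.cos b) +
          β * (Real.cos (b*α) * α * Real.sin (b*(1-α)) + Real.sin (b*α) * (Real.cos (b*(1-α)) * (1-α)))) = -b := by
        rw [hsb, hcosb, hbα, hsb1α0]
        linear_combination b * hkk'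
      have dh' : HasDerivAt h (-b) b := ev ▸ dH
      rw [hasDerivAt_iff_tendsto_slope] at dh'
      have hbpos : 0 < b := lt_trans ha0 hab
      have hev1 : ∀ᶠ z in 𝓝[≠] b, slope h b z < 0 :=
        dh'.eventually_lt_const (by linarith)
      have hev2 : ∀ᶠ z in 𝓝[<] b, slope h b z < 0 :=
        hev1.filter_mono (nhdsWithin_mono b (fun x hx => ne_of_lt hx))
      have hev3 : ∀ᶠ z in 𝓝[<] b, z ∈ Ioo (π * (k:ℝ)) b :=
        eventually_of_mem (Ioo_mem_nhdsLT hab) (fun z hz => hz)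
      obtain ⟨y₀, hsl, hy₀I⟩ := (hev2.and hev3).exists
      have hy₀pos : 0 < h y₀ := by
        have hslope : slope h b y₀ = h y₀ / (y₀ - b) := by
          rw [slope_def_field, hb0, sub_zero]
        rw [hslope] at hsl
        rcases div_neg_iff.mp hsl with ⟨hp, hq⟩ | ⟨hp, hq⟩
        · exact hp
        · exfalso; have := hy₀I.2; linarith
      obtain ⟨c, hcI, hc0⟩ := intermediate_value_Ioo (le_of_lt hy₀I.1) hcont.continuousOn
        (⟨hHa, hy₀pos⟩ : (0:ℝ) ∈ Ioo (h (π * (k:ℝ))) (h y₀))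
      refine ⟨c, ⟨hcI.1, lt_trans hcI.2 hy₀I.2⟩, ?_⟩
      have : (-1:ℝ)^k * (c * Real.sin c + β * (Real.sin (c*α) * Real.sin (c*(1-α)))) = 0 := hc0
      exact (mul_eq_zero.mp this).resolve_left hne
    · -- nondegenerate endpoint
      have hHb : 0 < h (π * ((k:ℝ)+1)) := by
        have hs2 : 0 < Real.sin (π * ((k:ℝ)+1) * α)^2 := pow_two_pos_of_ne_zero hbα
        have e : h (π * ((k:ℝ)+1)) = β * Real.sin (π * ((k:ℝ)+1) * α)^2 := by
          simp only [hhdef]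
          rw [hsb, hsb1α]
          linear_combination (-(β * Real.sin (π * ((k:ℝ)+1) * α)^2)) * hkk'
        rw [e]
        exact mul_pos hβ hs2
      obtain ⟨c, hcI, hc0⟩ := intermediate_value_Ioo (le_of_lt hab) hcont.continuousOn
        (⟨hHa, hHb⟩ : (0:ℝ) ∈ Ioo (h (π * (k:ℝ))) (h (π * ((k:ℝ)+1))))
      refine ⟨c, hcI, ?_⟩
      have : (-1:ℝ)^k * (c * Real.sin c + β * (Real.sin (c*α) * Real.sin (c*(1-α)))) = 0 := hc0
      exact (mul_eq_zero.mp this).resolve_left hne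
  -- sign of P at roots
  have hsgn : ∀ y ∈ Ioo (π * (k:ℝ)) (π * ((k:ℝ)+1)),
      y * Real.sin y + β * (Real.sin (y*α) * Real.sin (y*(1-α))) = 0 →
      (-1:ℝ)^k * (Real.sin (y*α) * Real.sin (y*(1-α))) < 0 := by
    intro y hy he
    have h1 := hsinpos y hy
    have hy0 : 0 < y := lt_trans ha0 hy.1
    have key : β * ((-1:ℝ)^k * (Real.sin (y*α) * Real.sin (y*(1-α)))) =
        -(y * ((-1:ℝ)^k * Real.sin y)) := by linear_combination ((-1:ℝ)^k) * he
    nlinarith [mul_pos hy0 h1, key, hβ]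
  -- uniqueness core
  have hcore : ∀ y₁ y₂, y₁ ∈ Ioo (π * (k:ℝ)) (π * ((k:ℝ)+1)) → y₂ ∈ Ioo (π * (k:ℝ)) (π * ((k:ℝ)+1)) →
      y₁ * Real.sin y₁ + β * (Real.sin (y₁*α) * Real.sin (y₁*(1-α))) = 0 →
      y₂ * Real.sin y₂ + β * (Real.sin (y₂*α) * Real.sin (y₂*(1-α))) = 0 →
      y₁ < y₂ → False := by
    intro y₁ y₂ h1 h2 e1 e2 hlt
    have hP1 := hsgn y₁ h1 e1
    have hP2 := hsgn y₂ h2 e2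
    have hIccsub : Icc y₁ y₂ ⊆ Ioo (π * (k:ℝ)) (π * ((k:ℝ)+1)) := fun z hz =>
      ⟨lt_of_lt_of_le h1.1 hz.1, lt_of_le_of_lt hz.2 h2.2⟩
    have hPne : ∀ y ∈ Icc y₁ y₂, Real.sin (y*α) * Real.sin (y*(1-α)) ≠ 0 := by
      intro c hc hc0
      have hcI := hIccsub hc
      have hcy1 : y₁ < c := by
        rcases eq_or_lt_of_le hc.1 with h | h
        · exfalso; rw [← h] at hc0; rw [hc0, mul_zero] at hP1; exact lt_irrefl 0 hP1
        · exact h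
      have hcy2 : c < y₂ := by
        rcases eq_or_lt_of_le hc.2 with h | h
        · exfalso; rw [h] at hc0; rw [hc0, mul_zero] at hP2; exact lt_irrefl 0 hP2
        · exact h
      rcases mul_eq_zero.mp hc0 with h | h
      · exact aux_key α hα0 hα1 k h1 h2 hcy1 hcy2 h hP1 hP2
      · have e : (1:ℝ) - (1-α) = α := by ring
        apply aux_key (1-α) (by linarith) (by linarith) k h1 h2 hcy1 hcy2 h
        · rw [e]; linarith [hP1]
        · rw [e]; linarith [hP2]
    set G : ℝ → ℝ := fun y => Real.cos (y*α)/Real.sin (y*α) +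
        Real.cos (y*(1-α))/Real.sin (y*(1-α)) + β/y with hGdef
    have hGder : ∀ y ∈ Icc y₁ y₂, HasDerivAt G
        (((-Real.sin (y*α) * α) * Real.sin (y*α) - Real.cos (y*α) * (Real.cos (y*α) * α)) / (Real.sin (y*α))^2 +
         ((-Real.sin (y*(1-α)) * (1-α)) * Real.sin (y*(1-α)) - Real.cos (y*(1-α)) * (Real.cos (y*(1-α)) * (1-α))) / (Real.sin (y*(1-α)))^2 +
         (0 * y - β * 1) / y^2) y := by
      intro y hy
      obtain ⟨hs, ht⟩ := mul_ne_zero_iff.mp (hPne y hy)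
      have hy0 : 0 < y := lt_trans ha0 (hIccsub hy).1
      have dsa : HasDerivAt (fun y:ℝ => Real.sin (y*α)) (Real.cos (y*α) * α) y :=
        by have := (Real.hasDerivAt_sin (y*α)).comp y (hasDerivAt_mul_const α); exact this
      have dca : HasDerivAt (fun y:ℝ => Real.cos (y*α)) (-Real.sin (y*α) * α) y :=
        by have := (Real.hasDerivAt_cos (y*α)).comp y (hasDerivAt_mul_const α); exact this
      have dsb2 : HasDerivAt (fun y:ℝ => Real.sin (y*(1-α))) (Real.cos (y*(1-α)) * (1-α)) y :=
        by have := (Real.hasDerivAt_sin (y*(1-α))).comp y (hasDerivAt_mul_const (1-α)); exact this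
      have dcb2 : HasDerivAt (fun y:ℝ => Real.cos (y*(1-α))) (-Real.sin (y*(1-α)) * (1-α)) y :=
        by have := (Real.hasDerivAt_cos (y*(1-α))).comp y (hasDerivAt_mul_const (1-α)); exact this
      exact ((dca.div dsa hs).add (dcb2.div dsb2 ht)).add
        ((hasDerivAt_const y β).div (hasDerivAt_id y) (ne_of_gt hy0))
    have hGcont : ContinuousOn G (Icc y₁ y₂) := fun y hy =>
      (hGder y hy).continuousAt.continuousWithinAt
    have hGanti : StrictAntiOn G (Icc y₁ y₂) := by
      apply strictAntiOn_of_deriv_neg (convex_Icc y₁ y₂) hGcont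
      intro x hx
      rw [interior_Icc] at hx
      have hx' := Ioo_subset_Icc_self hx
      rw [(hGder x hx').deriv]
      obtain ⟨hs, ht⟩ := mul_ne_zero_iff.mp (hPne x hx')
      have hx0 : 0 < x := lt_trans ha0 (hIccsub hx').1
      have q1 : 0 < (Real.sin (x*α))^2 := pow_two_pos_of_ne_zero hs
      have q2 : 0 < (Real.sin (x*(1-α)))^2 := pow_two_pos_of_ne_zero ht
      have q3 : 0 < x^2 := by positivity
      have e1 := Real.sin_sq_add_cos_sq (x*α)
      have e2 := Real.sin_sq_add_cos_sq (x*(1-α))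
      have r1 : ((-Real.sin (x*α) * α) * Real.sin (x*α) - Real.cos (x*α) * (Real.cos (x*α) * α)) / (Real.sin (x*α))^2 = -α / (Real.sin (x*α))^2 := by
        rw [div_eq_div_iff (ne_of_gt q1) (ne_of_gt q1)]
        linear_combination (-α * (Real.sin (x*α))^2) * e1
      have r2 : ((-Real.sin (x*(1-α)) * (1-α)) * Real.sin (x*(1-α)) - Real.cos (x*(1-α)) * (Real.cos (x*(1-α)) * (1-α))) / (Real.sin (x*(1-α)))^2 = -(1-α) / (Real.sin (x*(1-α)))^2 := by
        rw [div_eq_div_iff (ne_of_gt q2) (ne_of_gt q2)]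
        linear_combination (-(1-α) * (Real.sin (x*(1-α)))^2) * e2
      rw [r1, r2]
      have p1 : 0 < α / (Real.sin (x*α))^2 := div_pos hα0 q1
      have p2 : 0 < (1-α) / (Real.sin (x*(1-α)))^2 := div_pos (by linarith) q2
      have p3 : 0 < β / x^2 := div_pos hβ q3
      have : (0 * x - β * 1) / x^2 = -(β / x^2) := by ring
      rw [this]
      have : -α / (Real.sin (x*α))^2 = -(α / (Real.sin (x*α))^2) := by ring
      rw [this]
      have : -(1-α) / (Real.sin (x*(1-α)))^2 = -((1-α) / (Real.sin (x*(1-α)))^2) := by ring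
      rw [this]
      linarith
    have hGz : ∀ y ∈ Icc y₁ y₂,
        y * Real.sin y + β * (Real.sin (y*α) * Real.sin (y*(1-α))) = 0 → G y = 0 := by
      intro y hy he
      obtain ⟨hs, ht⟩ := mul_ne_zero_iff.mp (hPne y hy)
      have hy0 : 0 < y := lt_trans ha0 (hIccsub hy).1
      have hsiny : Real.sin y = Real.sin (y*α) * Real.cos (y*(1-α)) +
          Real.cos (y*α) * Real.sin (y*(1-α)) := by
        rw [← Real.sin_add]; congr 1; ring
      show Real.cos (y*α)/Real.sin (y*α) + Real.cos (y*(1-α))/Real.sin (y*(1-α)) + β/y = 0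
      field_simp
      linear_combination he - y * hsiny
    have g1 : G y₁ = 0 := hGz y₁ (left_mem_Icc.mpr (le_of_lt hlt)) e1
    have g2 : G y₂ = 0 := hGz y₂ (right_mem_Icc.mpr (le_of_lt hlt)) e2
    have := hGanti (left_mem_Icc.mpr (le_of_lt hlt)) (right_mem_Icc.mpr (le_of_lt hlt)) hlt
    rw [g1, g2] at this
    exact lt_irrefl 0 this
  obtain ⟨c, hcI, hc⟩ := hroot
  refine ⟨c, ⟨hcI, (hequiv c hcI).mpr hc⟩, ?_⟩
  intro z hz
  have hzH := (hequiv z hz.1).mp hz.2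
  rcases lt_trichotomy z c with h | h | h
  · exact absurd (hcore z c hz.1 hcI hzH hc h) (fun x => x)
  · exact h
  · exact absurd (hcore c z hcI hz.1 hc hzH h) (fun x => x)
end

section
/- Let α ∈ (0,1), β > 0, and k ∈ ℕ with sin(πkα) = 0. Then the equation -y/β = sin(yα)sin(y(1-α))/sin(y) has no solution y in the open interval (πk, π(k+1)). -/
open Real

theorem no_root_case1
    (α β : ℝ) (hα : α ∈ Set.Ioo (0:ℝ) 1) (hβ : 0 < β) (k : ℕ) (hk : 1 ≤ k)
    (hsin : Real.sin (Real.pi * k * α) = 0) :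
    ∀ y ∈ Set.Ioo (Real.pi * k) (Real.pi * (k + 1)),
      -y / β ≠ Real.sin (y * α) * Real.sin (y * (1 - α)) / Real.sin y := by
  obtain ⟨hα0, hα1⟩ := hα
  obtain ⟨m, hm⟩ := Real.sin_eq_zero_iff.1 hsin
  intro y hy
  obtain ⟨hy1, hy2⟩ := hy
  have hπ := Real.pi_pos
  have hk1 : (1:ℝ) ≤ (k:ℝ) := by exact_mod_cast hk
  have hy0 : 0 < y := lt_trans (by nlinarith) hy1
  set t := y - Real.pi * k with ht
  have ht0 : 0 < t := by simp only [ht]; linarith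
  have htπ : t < Real.pi := by simp only [ht]; nlinarith
  have hkα : (k:ℝ) * α = (m:ℝ) := by
    have h : Real.pi * ((k:ℝ) * α) = Real.pi * (m:ℝ) := by linarith [hm]
    exact mul_left_cancel₀ (ne_of_gt hπ) h
  have h1 : Real.sin (y * α) = (-1:ℝ)^m * Real.sin (t * α) := by
    have he : y * α = t * α + (m:ℝ) * Real.pi := by rw [← hkα]; simp only [ht]; ring
    rw [he, Real.sin_add_int_mul_pi]
  have h2 : Real.sin (y * (1 - α)) = (-1:ℝ)^((k:ℤ) - m) * Real.sin (t * (1 - α)) := by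
    have he : y * (1 - α) = t * (1 - α) + ((((k:ℤ) - m) : ℤ) : ℝ) * Real.pi := by
      push_cast
      rw [← hkα]; simp only [ht]; ring
    rw [he, Real.sin_add_int_mul_pi]
  have h3 : Real.sin y = (-1:ℝ)^(k:ℤ) * Real.sin t := by
    have he : y = t + ((k:ℤ):ℝ) * Real.pi := by push_cast; simp only [ht]; ring
    rw [he, Real.sin_add_int_mul_pi]
  have hA : 0 < Real.sin (t * α) :=
    Real.sin_pos_of_pos_of_lt_pi (by positivity) (by nlinarith)
  have hB : 0 < Real.sin (t * (1 - α)) :=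
    Real.sin_pos_of_pos_of_lt_pi (by nlinarith) (by nlinarith)
  have hC : 0 < Real.sin t := Real.sin_pos_of_pos_of_lt_pi ht0 htπ
  have hsign : (-1:ℝ)^m * (-1:ℝ)^((k:ℤ) - m) = (-1:ℝ)^(k:ℤ) := by
    rw [← zpow_add₀ (by norm_num : (-1:ℝ) ≠ 0)]
    ring_nf
  have hRHS : 0 < Real.sin (y * α) * Real.sin (y * (1 - α)) / Real.sin y := by
    rw [h1, h2, h3]
    have : (-1:ℝ)^m * Real.sin (t * α) * ((-1:ℝ)^((k:ℤ) - m) * Real.sin (t * (1 - α)))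
        = (-1:ℝ)^(k:ℤ) * (Real.sin (t * α) * Real.sin (t * (1 - α))) := by
      rw [← hsign]; ring
    have hne : (-1:ℝ)^(k:ℤ) ≠ 0 := by
      intro h; exact absurd h (zpow_ne_zero _ (by norm_num))
    rw [this, mul_div_mul_left _ _ hne]
    positivity
  have hLHS : -y / β < 0 := div_neg_of_neg_of_pos (by linarith) hβ
  exact ne_of_lt (lt_trans hLHS hRHS)
end

section
/- Let α ∈ (0,1), β ≥ 0, and k ∈ ℕ. Then the equation √λ·sin(√λ) = -β·sin(√λ·α)·sin(√λ·(1-α)) has exactly one root λ in the interval [π²k², π²(k+1)²). -/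
open Real

noncomputable def gfun (α β x : ℝ) : ℝ :=
  x * Real.sin x + β * (Real.sin (α*x) * Real.sin ((1-α)*x))

noncomputable def Gfun (α x : ℝ) : ℝ :=
  x * Real.cos (α*x) / Real.sin (α*x) + x * Real.cos ((1-α)*x) / Real.sin ((1-α)*x)

lemma gfun_cont (α β : ℝ) : Continuous (gfun α β) := by
  unfold gfun
  continuity

lemma hasDerivAt_xcot (c x : ℝ) (hs : Real.sin (c*x) ≠ 0) :
    HasDerivAt (fun y => y * Real.cos (c*y) / Real.sin (c*y))
      ((Real.sin (c*x) * Real.cos (c*x) - c * x) / Real.sin (c*x) ^ 2) x := by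
  have h1 : HasDerivAt (fun y : ℝ => c * y) c x := by
    simpa using (hasDerivAt_id x).const_mul c
  have hcos : HasDerivAt (fun y => Real.cos (c*y)) (-Real.sin (c*x) * c) x :=
    (Real.hasDerivAt_cos (c*x)).comp x h1
  have hsin : HasDerivAt (fun y => Real.sin (c*y)) (Real.cos (c*x) * c) x :=
    (Real.hasDerivAt_sin (c*x)).comp x h1
  have hnum : HasDerivAt (fun y => y * Real.cos (c*y))
      (1 * Real.cos (c*x) + x * (-Real.sin (c*x) * c)) x :=
    (hasDerivAt_id x).mul hcos
  have hdiv := hnum.div hsin hs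
  have hpy := Real.sin_sq_add_cos_sq (c*x)
  have heq : (Real.sin (c*x) * Real.cos (c*x) - c * x) =
      ((1 * Real.cos (c*x) + x * (-Real.sin (c*x) * c)) * Real.sin (c*x)
        - x * Real.cos (c*x) * (Real.cos (c*x) * c)) := by
    linear_combination (c*x) * hpy
  rw [heq]
  exact hdiv

lemma strictAntiOn_xcot {c a b : ℝ} (hc : 0 < c) (ha : 0 < a)
    (hs : ∀ x ∈ Set.Icc a b, Real.sin (c*x) ≠ 0) :
    StrictAntiOn (fun x => x * Real.cos (c*x) / Real.sin (c*x)) (Set.Icc a b) := by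
  apply strictAntiOn_of_deriv_neg (convex_Icc a b)
  · apply ContinuousOn.div
    · fun_prop
    · fun_prop
    · intro x hx; exact hs x hx
  · intro x hx
    rw [interior_Icc] at hx
    have hx' : x ∈ Set.Icc a b := Set.Ioo_subset_Icc_self hx
    have hsx := hs x hx'
    have hxpos : 0 < x := lt_of_lt_of_le ha hx'.1
    rw [(hasDerivAt_xcot c x hsx).deriv]
    apply div_neg_of_neg_of_pos
    · have h2 : Real.sin (2*(c*x)) < 2*(c*x) := Real.sin_lt (by positivity)
      rw [Real.sin_two_mul] at h2
      nlinarith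
    · have h3 : Real.sin (c*x) ^ 2 ≠ 0 := pow_ne_zero 2 hsx
      exact lt_of_le_of_ne (sq_nonneg _) (Ne.symm h3)

lemma strictAntiOn_Gfun {α a b : ℝ} (hα : α ∈ Set.Ioo (0:ℝ) 1) (ha : 0 < a)
    (hs1 : ∀ x ∈ Set.Icc a b, Real.sin (α*x) ≠ 0)
    (hs2 : ∀ x ∈ Set.Icc a b, Real.sin ((1-α)*x) ≠ 0) :
    StrictAntiOn (Gfun α) (Set.Icc a b) := by
  have h1 := strictAntiOn_xcot hα.1 ha hs1
  have h2 := strictAntiOn_xcot (c := 1-α) (by linarith [hα.2]) ha hs2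
  intro x hx y hy hxy
  exact add_lt_add (h1 hx hy hxy) (h2 hx hy hxy)

lemma gfun_eq {α β x : ℝ} (h1 : Real.sin (α*x) ≠ 0) (h2 : Real.sin ((1-α)*x) ≠ 0) :
    gfun α β x = (Real.sin (α*x) * Real.sin ((1-α)*x)) * (Gfun α x + β) := by
  have hsx : Real.sin x =
      Real.sin (α*x) * Real.cos ((1-α)*x) + Real.cos (α*x) * Real.sin ((1-α)*x) := by
    rw [← Real.sin_add]
    congr 1
    ring
  simp only [gfun, Gfun, hsx]
  rw [div_add_div _ _ h1 h2, mul_add (Real.sin (α*x) * Real.sin ((1-α)*x)), mul_div_assoc', mul_div_cancel_left₀ _ (mul_ne_zero h1 h2)]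
  ring

lemma Gfun_zero {α x : ℝ} (hx : Real.sin x = 0) (h1 : Real.sin (α*x) ≠ 0)
    (h2 : Real.sin ((1-α)*x) ≠ 0) : Gfun α x = 0 := by
  simp only [Gfun]
  rw [div_add_div _ _ h1 h2, div_eq_zero_iff]
  left
  have hkey : x * Real.cos (α*x) * Real.sin ((1-α)*x) + Real.sin (α*x) * (x * Real.cos ((1-α)*x))
      = x * Real.sin (α*x + (1-α)*x) := by
    rw [Real.sin_add]; ring
  rw [hkey, show α*x + (1-α)*x = x by ring, hx, mul_zero]

lemma sin_sign {k : ℕ} {x : ℝ} (h1 : Real.pi*k < x) (h2 : x < Real.pi*(k+1)) :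
    0 < (-1:ℝ)^k * Real.sin x := by
  have hπ := Real.pi_pos
  set t := Real.pi*(k+1) - x with ht
  have ht1 : 0 < t := by simp [ht]; linarith
  have ht2 : t < Real.pi := by
    simp only [ht]
    push_cast
    nlinarith
  have hs := Real.sin_nat_mul_pi_sub t (k+1)
  have harg : ((k+1 : ℕ):ℝ) * Real.pi - t = x := by push_cast; simp [ht]; ring
  rw [harg] at hs
  have hpos := Real.sin_pos_of_pos_of_lt_pi ht1 ht2
  rw [hs]
  have h4 : ((-1:ℝ)^k) * (-1)^k = 1 := by
    rw [← pow_add]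
    exact Even.neg_one_pow ⟨k, rfl⟩
  rw [pow_succ]
  nlinarith

lemma zero_loc {c : ℝ} (hc : 0 < c) {k : ℕ} {x : ℝ}
    (hx : x ∈ Set.Ioc (Real.pi*k) (Real.pi*(k+1))) (hz : Real.sin (c*x) = 0) :
    ∃ m : ℤ, c*x = m*Real.pi ∧ (k:ℝ)*c < m ∧ (m:ℝ) ≤ (k+1)*c := by
  have hπ := Real.pi_pos
  obtain ⟨m, hm⟩ := Real.sin_eq_zero_iff.1 hz
  refine ⟨m, hm.symm, ?_, ?_⟩
  · nlinarith [hx.1]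
  · nlinarith [hx.2]

lemma same_factor {c : ℝ} (hc : 0 < c) (hc1 : c < 1) {k : ℕ} {x y : ℝ}
    (hx : x ∈ Set.Ioc (Real.pi*k) (Real.pi*(k+1)))
    (hy : y ∈ Set.Ioc (Real.pi*k) (Real.pi*(k+1)))
    (hzx : Real.sin (c*x) = 0) (hzy : Real.sin (c*y) = 0) : x = y := by
  obtain ⟨m, hm, hm1, hm2⟩ := zero_loc hc hx hzx
  obtain ⟨n, hn, hn1, hn2⟩ := zero_loc hc hy hzy
  have h1 : (m:ℝ) - n < 1 := by linarith
  have h2 : (n:ℝ) - m < 1 := by linarith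
  have h1' : m - n < 1 := by exact_mod_cast (by push_cast; linarith : ((m - n : ℤ):ℝ) < 1)
  have h2' : n - m < 1 := by exact_mod_cast (by push_cast; linarith : ((n - m : ℤ):ℝ) < 1)
  have : m = n := by omega
  subst this
  have hπ := Real.pi_pos
  have : c * x = c * y := by rw [hm, hn]
  exact mul_left_cancel₀ (ne_of_gt hc) this

lemma cross_factor {α : ℝ} (hα : α ∈ Set.Ioo (0:ℝ) 1) {k : ℕ} {x y : ℝ}
    (hx : x ∈ Set.Ioc (Real.pi*k) (Real.pi*(k+1)))
    (hy : y ∈ Set.Ioc (Real.pi*k) (Real.pi*(k+1)))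
    (hzx : Real.sin (α*x) = 0) (hzy : Real.sin ((1-α)*y) = 0) :
    x = Real.pi*(k+1) ∧ y = Real.pi*(k+1) := by
  have hπ := Real.pi_pos
  obtain ⟨m, hm, hm1, hm2⟩ := zero_loc hα.1 hx hzx
  obtain ⟨n, hn, hn1, hn2⟩ := zero_loc (by linarith [hα.2] : (0:ℝ) < 1 - α) hy hzy
  have l1 : (k:ℝ) < m + n := by nlinarith
  have l2 : (m:ℝ) + n ≤ k + 1 := by nlinarith
  have l1' : (k:ℤ) < m + n := by exact_mod_cast (by push_cast; linarith : ((k:ℤ):ℝ) < ((m+n : ℤ):ℝ))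
  have l2' : m + n ≤ (k:ℤ) + 1 := by exact_mod_cast (by push_cast; linarith : ((m+n : ℤ):ℝ) ≤ (((k:ℤ)+1 : ℤ):ℝ))
  have hsum : m + n = k + 1 := by omega
  have hsumR : (m:ℝ) + n = (k:ℝ) + 1 := by exact_mod_cast congrArg (fun z : ℤ => (z:ℝ)) hsum
  have hmeq : (m:ℝ) = (k+1)*α := by nlinarith
  have hneq : (n:ℝ) = (k+1)*(1-α) := by nlinarith
  constructor
  · have : α * x = α * (Real.pi*(k+1)) := by rw [hm, hmeq]; ring
    exact mul_left_cancel₀ (ne_of_gt hα.1) this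
  · have : (1-α) * y = (1-α) * (Real.pi*(k+1)) := by rw [hn, hneq]; ring
    exact mul_left_cancel₀ (by linarith [hα.2] : (0:ℝ) < 1 - α).ne' this

lemma zeros_unique {α : ℝ} (hα : α ∈ Set.Ioo (0:ℝ) 1) {k : ℕ} {x y : ℝ}
    (hx : x ∈ Set.Ioc (Real.pi*k) (Real.pi*(k+1)))
    (hy : y ∈ Set.Ioc (Real.pi*k) (Real.pi*(k+1)))
    (hzx : Real.sin (α*x) * Real.sin ((1-α)*x) = 0)
    (hzy : Real.sin (α*y) * Real.sin ((1-α)*y) = 0) : x = y := by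
  have h1α : (0:ℝ) < 1 - α := by linarith [hα.2]
  rcases mul_eq_zero.1 hzx with h1 | h1 <;> rcases mul_eq_zero.1 hzy with h2 | h2
  · exact same_factor hα.1 hα.2 hx hy h1 h2
  · obtain ⟨e1, e2⟩ := cross_factor hα hx hy h1 h2
    rw [e1, e2]
  · obtain ⟨e1, e2⟩ := cross_factor hα hy hx h2 h1
    rw [e1, e2]
  · exact same_factor h1α (by linarith [hα.1]) hx hy h1 h2

lemma sin_one_sub (α : ℝ) (n : ℕ) :
    Real.sin ((1-α)*(Real.pi*n)) = -((-1:ℝ)^n * Real.sin (α*(Real.pi*n))) := by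
  rw [show (1-α)*(Real.pi*n) = (n:ℝ)*Real.pi - α*(Real.pi*n) by ring]
  exact Real.sin_nat_mul_pi_sub _ n

lemma zero_exists {α : ℝ} (hα : α ∈ Set.Ioo (0:ℝ) 1) {k : ℕ}
    (hs : Real.sin (α*(Real.pi*k)) ≠ 0) :
    ∃ x ∈ Set.Ioc (Real.pi*k) (Real.pi*(k+1)),
      Real.sin (α*x) * Real.sin ((1-α)*x) = 0 := by
  have hπ := Real.pi_pos
  have hα1 : 0 < α := hα.1
  have h1α : (0:ℝ) < 1 - α := by linarith [hα.2]
  set m0 : ℤ := ⌊(k:ℝ)*α⌋ with hm0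
  have hf1 : (m0:ℝ) ≤ (k:ℝ)*α := Int.floor_le _
  have hf2 : (k:ℝ)*α < (m0:ℝ) + 1 := Int.lt_floor_add_one _
  have hne : (m0:ℝ) ≠ (k:ℝ)*α := by
    intro h
    apply hs
    rw [show α*(Real.pi*(k:ℝ)) = ((k:ℝ)*α)*Real.pi by ring, ← h]
    exact Real.sin_int_mul_pi m0
  have hlt : (m0:ℝ) < (k:ℝ)*α := lt_of_le_of_ne hf1 hne
  by_cases hcase : ((m0:ℝ) + 1) ≤ ((k:ℝ)+1)*α
  · refine ⟨((m0:ℝ)+1)*Real.pi/α, ⟨?_, ?_⟩, ?_⟩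
    · rw [lt_div_iff₀ hα1]; nlinarith
    · rw [div_le_iff₀ hα1]; nlinarith
    · have : α * (((m0:ℝ)+1)*Real.pi/α) = ((m0+1 : ℤ):ℝ)*Real.pi := by
        push_cast; field_simp
      rw [this, Real.sin_int_mul_pi]
      simp
  · push_neg at hcase
    refine ⟨((k:ℝ) - m0)*Real.pi/(1-α), ⟨?_, ?_⟩, ?_⟩
    · rw [lt_div_iff₀ h1α]; nlinarith
    · rw [div_le_iff₀ h1α]; nlinarith
    · have : (1-α) * (((k:ℝ) - m0)*Real.pi/(1-α)) = (((k:ℤ) - m0 : ℤ):ℝ)*Real.pi := by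
        push_cast; field_simp
      rw [this, Real.sin_int_mul_pi]
      simp

lemma zero_none {α : ℝ} (hα : α ∈ Set.Ioo (0:ℝ) 1) {k : ℕ}
    (hs : Real.sin (α*(Real.pi*k)) = 0) :
    ∀ x ∈ Set.Ioc (Real.pi*k) (Real.pi*(k+1)),
      Real.sin (α*x) ≠ 0 ∧ Real.sin ((1-α)*x) ≠ 0 := by
  have hπ := Real.pi_pos
  have hα1 : 0 < α := hα.1
  have h1α : (0:ℝ) < 1 - α := by linarith [hα.2]
  obtain ⟨m0, hm0⟩ := Real.sin_eq_zero_iff.1 hs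
  have hm0' : (k:ℝ)*α = m0 := by
    have : (m0:ℝ) * Real.pi = ((k:ℝ)*α) * Real.pi := by rw [hm0]; ring
    nlinarith [mul_right_cancel₀ (ne_of_gt hπ) this]
  intro x hx
  constructor
  · intro hz
    obtain ⟨m, hm, hb1, hb2⟩ := zero_loc hα1 hx hz
    have c1 : (m0:ℝ) < m := by linarith
    have c2 : (m:ℝ) < m0 + 1 := by nlinarith
    have c1' : m0 < m := by exact_mod_cast c1
    have c2' : m < m0 + 1 := by exact_mod_cast c2
    omega
  · intro hz
    obtain ⟨m, hm, hb1, hb2⟩ := zero_loc h1α hx hz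
    have c1 : ((k:ℝ) - m0) < m := by nlinarith
    have c2 : (m:ℝ) < (k:ℝ) - m0 + 1 := by nlinarith
    have c1' : (k:ℤ) - m0 < m := by exact_mod_cast c1
    have c2' : m < (k:ℤ) - m0 + 1 := by exact_mod_cast c2
    omega

lemma root_sines {α β : ℝ} {k : ℕ} {x : ℝ} (hx1 : Real.pi*k < x) (hx2 : x < Real.pi*(k+1))
    (hg : gfun α β x = 0) : Real.sin (α*x) ≠ 0 ∧ Real.sin ((1-α)*x) ≠ 0 := by
  have hsx := sin_sign hx1 hx2
  have hxpos : 0 < x := by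
    have : (0:ℝ) ≤ Real.pi*k := by positivity
    linarith
  have hsinne : Real.sin x ≠ 0 := by
    intro h; rw [h] at hsx; simp at hsx
  constructor
  · intro h
    simp only [gfun, h, zero_mul, mul_zero, add_zero] at hg
    rcases mul_eq_zero.1 hg with h' | h'
    · exact absurd h' (ne_of_gt hxpos)
    · exact hsinne h'
  · intro h
    simp only [gfun, h, mul_zero, add_zero] at hg
    rcases mul_eq_zero.1 hg with h' | h'
    · exact absurd h' (ne_of_gt hxpos)
    · exact hsinne h'

lemma g_at_A (α β : ℝ) (k : ℕ) :
    gfun α β (Real.pi*k) = -((-1:ℝ)^k) * β * Real.sin (α*(Real.pi*k))^2 := by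
  simp only [gfun]
  rw [sin_one_sub, show Real.sin (Real.pi*(k:ℝ)) = 0 by
    rw [mul_comm]; exact Real.sin_nat_mul_pi k]
  ring

lemma ivt_helper {α β : ℝ} {k : ℕ} {u v : ℝ} (huv : u < v)
    (h1 : (-1:ℝ)^k * gfun α β u < 0) (h2 : 0 < (-1:ℝ)^k * gfun α β v) :
    ∃ z ∈ Set.Ioo u v, gfun α β z = 0 := by
  have hcont : ContinuousOn (fun z => (-1:ℝ)^k * gfun α β z) (Set.Icc u v) :=
    (continuous_const.mul (gfun_cont α β)).continuousOn
  have h0 : (0:ℝ) ∈ Set.Ioo ((-1:ℝ)^k * gfun α β u) ((-1:ℝ)^k * gfun α β v) := ⟨h1, h2⟩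
  obtain ⟨z, hz, hz0⟩ := intermediate_value_Ioo huv.le hcont h0
  refine ⟨z, hz, ?_⟩
  have hne : ((-1:ℝ)^k) ≠ 0 := pow_ne_zero _ (by norm_num)
  rcases mul_eq_zero.1 hz0 with h | h
  · exact absurd h hne
  · exact h

lemma neg_one_pow_sq (k : ℕ) : ((-1:ℝ)^k) * (-1)^k = 1 := by
  rw [← pow_add]
  exact Even.neg_one_pow ⟨k, rfl⟩

lemma sin_root_endpoint {k : ℕ} {x : ℝ}
    (hx : x ∈ Set.Ico (Real.pi*k) (Real.pi*(k+1))) (h : Real.sin x = 0) :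
    x = Real.pi*k := by
  have hπ := Real.pi_pos
  obtain ⟨m, hm⟩ := Real.sin_eq_zero_iff.1 h
  have h1 : (k:ℝ) ≤ m := by nlinarith [hx.1]
  have h2 : (m:ℝ) < (k:ℝ)+1 := by nlinarith [hx.2]
  have h1' : (k:ℤ) ≤ m := by exact_mod_cast h1
  have h2' : m < (k:ℤ)+1 := by exact_mod_cast h2
  have : m = (k:ℤ) := by omega
  rw [← hm, this]
  push_cast
  ring

lemma both_zero_at_B {α : ℝ} {k : ℕ}
    (h : Real.sin (α*(Real.pi*((k:ℝ)+1))) * Real.sin ((1-α)*(Real.pi*((k:ℝ)+1))) = 0) :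
    Real.sin (α*(Real.pi*((k:ℝ)+1))) = 0 ∧ Real.sin ((1-α)*(Real.pi*((k:ℝ)+1))) = 0 := by
  have hrel : Real.sin ((1-α)*(Real.pi*((k:ℝ)+1)))
      = -((-1:ℝ)^(k+1) * Real.sin (α*(Real.pi*((k:ℝ)+1)))) := by
    have := sin_one_sub α (k+1)
    push_cast at this
    exact this
  have hne : ((-1:ℝ)^(k+1)) ≠ 0 := pow_ne_zero _ (by norm_num)
  rcases mul_eq_zero.1 h with h1 | h1
  · exact ⟨h1, by rw [hrel, h1]; ring⟩
  · refine ⟨?_, h1⟩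
    rw [hrel] at h1
    have := neg_eq_zero.1 h1
    rcases mul_eq_zero.1 this with h2 | h2
    · exact absurd h2 hne
    · exact h2

set_option maxHeartbeats 1000000 in
lemma exists_root {α β : ℝ} (hα : α ∈ Set.Ioo (0:ℝ) 1) (hβ : 0 ≤ β) {k : ℕ} (hk : 1 ≤ k) :
    ∃ x ∈ Set.Ico (Real.pi*k) (Real.pi*(k+1)), gfun α β x = 0 := by
  have hπ := Real.pi_pos
  have hα1 : 0 < α := hα.1
  have h1α : (0:ℝ) < 1 - α := by linarith [hα.2]
  have hkpos : (0:ℝ) < k := by exact_mod_cast hk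
  have hA0 : 0 < Real.pi*(k:ℝ) := by positivity
  have hAB : Real.pi*(k:ℝ) < Real.pi*((k:ℝ)+1) := by nlinarith
  have hsq := neg_one_pow_sq k
  by_cases h0 : β * Real.sin (α*(Real.pi*k)) = 0
  · refine ⟨Real.pi*k, ⟨le_refl _, hAB⟩, ?_⟩
    rw [g_at_A]
    rcases mul_eq_zero.1 h0 with h | h
    · rw [h]; ring
    · rw [h]; ring
  · have hβpos : 0 < β := by
      rcases lt_or_eq_of_le hβ with h | h
      · exact h
      · exact absurd (by rw [← h]; ring) h0
    have hs : Real.sin (α*(Real.pi*k)) ≠ 0 := fun h => h0 (by rw [h]; ring)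
    have hgA : (-1:ℝ)^k * gfun α β (Real.pi*k) < 0 := by
      rw [g_at_A]
      have hsp : 0 < Real.sin (α*(Real.pi*(k:ℝ)))^2 :=
        lt_of_le_of_ne (sq_nonneg _) (Ne.symm (pow_ne_zero 2 hs))
      nlinarith [mul_pos hβpos hsp]
    obtain ⟨x₀, hx₀mem, hx₀z⟩ := zero_exists hα hs
    by_cases hx₀B : x₀ = Real.pi*((k:ℝ)+1)
    · -- the zero of the product is at the right endpoint
      rw [hx₀B] at hx₀z
      obtain ⟨hz1, hz2⟩ := both_zero_at_B hx₀z
      obtain ⟨δ, hδ0, hδ1, hδ2'⟩ : ∃ δ : ℝ, 0 < δ ∧ δ ≤ 1 ∧ δ * (2*β+1) ≤ Real.pi*k := by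
        refine ⟨min 1 (Real.pi*k/(2*β+1)), lt_min one_pos (div_pos hA0 (by linarith)),
          min_le_left _ _, ?_⟩
        have h2 : min 1 (Real.pi*k/(2*β+1)) ≤ Real.pi*k/(2*β+1) := min_le_right _ _
        have := (le_div_iff₀ (by linarith : (0:ℝ) < 2*β+1)).1 h2
        linarith
      obtain ⟨xe, hxe⟩ : ∃ xe : ℝ, xe = Real.pi*((k:ℝ)+1) - δ := ⟨_, rfl⟩
      have hπ3 := Real.pi_gt_three
      have hxe1 : Real.pi*(k:ℝ) < xe := by
        rw [hxe]; nlinarith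
      have hxe2 : xe < Real.pi*((k:ℝ)+1) := by rw [hxe]; linarith
      have hsinxe : (-1:ℝ)^k * Real.sin xe = Real.sin δ := by
        have h := Real.sin_nat_mul_pi_sub δ (k+1)
        push_cast at h
        have harg : ((k:ℝ)+1) * Real.pi - δ = xe := by rw [hxe]; ring
        rw [harg] at h
        rw [h, pow_succ]
        linear_combination (Real.sin δ) * hsq
      have hsinδ : δ/2 ≤ Real.sin δ := by
        have h1 := Real.sin_gt_sub_cube hδ0
        have h3 : δ^3 ≤ δ := by
          nlinarith [mul_nonneg (mul_nonneg hδ0.le (by linarith : (0:ℝ) ≤ 1-δ))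
            (by linarith : (0:ℝ) ≤ 1+δ)]
        linarith
      have hb1 : |Real.sin (α*xe)| ≤ α*δ := by
        obtain ⟨m, hm⟩ := Real.sin_eq_zero_iff.1 hz1
        have harg : α*xe = (m:ℝ)*Real.pi - α*δ := by rw [hxe, hm]; ring
        rw [harg, Real.sin_int_mul_pi_sub, abs_neg, abs_mul, abs_neg_one_zpow, one_mul]
        calc |Real.sin (α*δ)| ≤ |α*δ| := Real.abs_sin_le_abs
          _ = α*δ := abs_of_nonneg (by positivity)
      have hb2 : |Real.sin ((1-α)*xe)| ≤ (1-α)*δ := by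
        obtain ⟨m, hm⟩ := Real.sin_eq_zero_iff.1 hz2
        have harg : (1-α)*xe = (m:ℝ)*Real.pi - (1-α)*δ := by rw [hxe, hm]; ring
        rw [harg, Real.sin_int_mul_pi_sub, abs_neg, abs_mul, abs_neg_one_zpow, one_mul]
        calc |Real.sin ((1-α)*δ)| ≤ |(1-α)*δ| := Real.abs_sin_le_abs
          _ = (1-α)*δ := abs_of_nonneg (by positivity)
      have hgxe : 0 < (-1:ℝ)^k * gfun α β xe := by
        simp only [gfun]
        have e1 : (-1:ℝ)^k * (xe * Real.sin xe) = xe * Real.sin δ := by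
          linear_combination xe * hsinxe
        have e2 : |Real.sin (α*xe) * Real.sin ((1-α)*xe)| ≤ δ*δ := by
          rw [abs_mul]
          calc |Real.sin (α*xe)| * |Real.sin ((1-α)*xe)| ≤ (α*δ) * ((1-α)*δ) := by
                apply mul_le_mul hb1 hb2 (abs_nonneg _) (by positivity)
            _ ≤ δ*δ := by
                nlinarith [mul_nonneg (mul_pos hδ0 hδ0).le h1α.le,
                  mul_nonneg (mul_pos hδ0 hδ0).le (sq_nonneg α)]
        have e3 : -(δ*δ) ≤ (-1:ℝ)^k * (Real.sin (α*xe) * Real.sin ((1-α)*xe)) := by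
          have habs : |(-1:ℝ)^k * (Real.sin (α*xe) * Real.sin ((1-α)*xe))|
              = |Real.sin (α*xe) * Real.sin ((1-α)*xe)| := by
            rw [abs_mul, abs_pow, abs_neg, abs_one, one_pow, one_mul]
          have := neg_abs_le ((-1:ℝ)^k * (Real.sin (α*xe) * Real.sin ((1-α)*xe)))
          rw [habs] at this
          linarith
        have hsinδpos : 0 < Real.sin δ := by linarith
        have hxearea : Real.pi*(k:ℝ) * Real.sin δ ≤ xe * Real.sin δ :=
          mul_le_mul_of_nonneg_right hxe1.le hsinδpos.le
        have h6 : δ*(2*β+1)*δ ≤ Real.pi*(k:ℝ)*δ := mul_le_mul_of_nonneg_right hδ2' hδ0.le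
        have hfin : Real.pi*(k:ℝ) * (δ/2) - β*(δ*δ) > 0 := by
          nlinarith [h6, mul_pos hδ0 hδ0]
        have h7 : Real.pi*(k:ℝ)*(δ/2) ≤ Real.pi*(k:ℝ) * Real.sin δ := by
          apply mul_le_mul_of_nonneg_left _ hA0.le
          linarith
        have h8 : β*(-(δ*δ)) ≤ β * ((-1:ℝ)^k * (Real.sin (α*xe) * Real.sin ((1-α)*xe))) :=
          mul_le_mul_of_nonneg_left e3 hβ
        calc (0:ℝ) < Real.pi*(k:ℝ) * (δ/2) - β*(δ*δ) := hfin
          _ ≤ xe * Real.sin δ - β*(δ*δ) := by linarith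
          _ ≤ (-1:ℝ)^k * (xe * Real.sin xe) + β * ((-1:ℝ)^k * (Real.sin (α*xe) * Real.sin ((1-α)*xe))) := by
              rw [e1]; linarith
          _ = (-1:ℝ)^k * (xe * Real.sin xe + β * (Real.sin (α*xe) * Real.sin ((1-α)*xe))) := by ring
      obtain ⟨z, hz, hz0⟩ := ivt_helper hxe1 hgA hgxe
      exact ⟨z, ⟨hz.1.le, lt_trans hz.2 hxe2⟩, hz0⟩
    · -- the zero of the product is interior
      have hx₀lt : x₀ < Real.pi*((k:ℝ)+1) := lt_of_le_of_ne hx₀mem.2 hx₀B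
      have hgx₀ : 0 < (-1:ℝ)^k * gfun α β x₀ := by
        have hsx := sin_sign hx₀mem.1 hx₀lt
        simp only [gfun, hx₀z, mul_zero, add_zero]
        have hx₀pos : 0 < x₀ := lt_trans hA0 hx₀mem.1
        nlinarith [mul_pos hx₀pos hsx]
      obtain ⟨z, hz, hz0⟩ := ivt_helper hx₀mem.1 hgA hgx₀
      exact ⟨z, ⟨hz.1.le, lt_trans hz.2 hx₀lt⟩, hz0⟩

lemma Groot {α β : ℝ} {k : ℕ} {z : ℝ} (h1 : Real.pi*k < z) (h2 : z < Real.pi*(k+1))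
    (hg : gfun α β z = 0) : Gfun α z = -β := by
  obtain ⟨s1, s2⟩ := root_sines h1 h2 hg
  have he := gfun_eq (β := β) s1 s2
  rw [hg] at he
  have hP : Real.sin (α*z) * Real.sin ((1-α)*z) ≠ 0 := mul_ne_zero s1 s2
  have := (mul_eq_zero.1 he.symm).resolve_left hP
  linarith

lemma no_two_roots {α β : ℝ} (hα : α ∈ Set.Ioo (0:ℝ) 1) (hβ : 0 ≤ β) {k : ℕ} (hk : 1 ≤ k)
    {x₀ p q : ℝ}
    (hx₀mem : x₀ ∈ Set.Ioc (Real.pi*k) (Real.pi*(k+1)))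
    (hx₀z : Real.sin (α*x₀) * Real.sin ((1-α)*x₀) = 0)
    (hp1 : Real.pi*k < p) (hq2 : q < Real.pi*(k+1)) (hpq : p < q)
    (hgp : gfun α β p = 0) (hgq : gfun α β q = 0) : False := by
  have hπ := Real.pi_pos
  have hkpos : (0:ℝ) < k := by exact_mod_cast hk
  have hA0 : 0 < Real.pi*(k:ℝ) := by positivity
  have hq1 : Real.pi*(k:ℝ) < q := lt_trans hp1 hpq
  have hp2 : p < Real.pi*((k:ℝ)+1) := lt_trans hpq hq2
  have hGp : Gfun α p = -β := Groot hp1 hp2 hgp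
  have hGq : Gfun α q = -β := Groot hq1 hq2 hgq
  obtain ⟨sp1, sp2⟩ := root_sines hp1 hp2 hgp
  obtain ⟨sq1, sq2⟩ := root_sines hq1 hq2 hgq
  have hppos : 0 < p := lt_trans hA0 hp1
  have hqpos : 0 < q := lt_trans hA0 hq1
  by_cases hmem : x₀ ∈ Set.Ioo p q
  · -- x₀ between the two roots : work on [q, π(k+1)]
    have hnz : ∀ w ∈ Set.Icc q (Real.pi*((k:ℝ)+1)),
        Real.sin (α*w) ≠ 0 ∧ Real.sin ((1-α)*w) ≠ 0 := by
      intro w hw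
      have hw' : w ∈ Set.Ioc (Real.pi*(k:ℝ)) (Real.pi*((k:ℝ)+1)) :=
        ⟨lt_of_lt_of_le hq1 hw.1, hw.2⟩
      constructor
      · intro h
        have hwz : Real.sin (α*w) * Real.sin ((1-α)*w) = 0 := by rw [h]; ring
        have hwx : w = x₀ := zeros_unique hα hw' hx₀mem hwz hx₀z
        rw [hwx] at hw
        exact absurd hmem.2 (not_lt.2 hw.1)
      · intro h
        have hwz : Real.sin (α*w) * Real.sin ((1-α)*w) = 0 := by rw [h]; ring
        have hwx : w = x₀ := zeros_unique hα hw' hx₀mem hwz hx₀z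
        rw [hwx] at hw
        exact absurd hmem.2 (not_lt.2 hw.1)
    have hanti := strictAntiOn_Gfun hα hqpos (fun w hw => (hnz w hw).1)
      (fun w hw => (hnz w hw).2)
    have hGB : Gfun α (Real.pi*((k:ℝ)+1)) = 0 := by
      apply Gfun_zero
      · rw [show Real.pi*((k:ℝ)+1) = ((k+1:ℕ):ℝ)*Real.pi by push_cast; ring]
        exact Real.sin_nat_mul_pi (k+1)
      · exact (hnz _ ⟨hq2.le, le_refl _⟩).1
      · exact (hnz _ ⟨hq2.le, le_refl _⟩).2
    have hlt := hanti (Set.left_mem_Icc.2 hq2.le) (Set.right_mem_Icc.2 hq2.le) hq2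
    rw [hGB, hGq] at hlt
    linarith
  · -- no zero between the roots : work on [p, q]
    have hnz : ∀ w ∈ Set.Icc p q, Real.sin (α*w) ≠ 0 ∧ Real.sin ((1-α)*w) ≠ 0 := by
      intro w hw
      have hw' : w ∈ Set.Ioc (Real.pi*(k:ℝ)) (Real.pi*((k:ℝ)+1)) :=
        ⟨lt_of_lt_of_le hp1 hw.1, le_trans hw.2 hq2.le⟩
      have hcore : Real.sin (α*w) * Real.sin ((1-α)*w) = 0 → False := by
        intro hwz
        have hwx : w = x₀ := zeros_unique hα hw' hx₀mem hwz hx₀z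
        rw [hwx] at hw
        have hx0pq : x₀ = p ∨ x₀ = q := by
          by_contra hc
          push_neg at hc
          exact hmem ⟨lt_of_le_of_ne hw.1 (Ne.symm hc.1), lt_of_le_of_ne hw.2 hc.2⟩
        rcases hx0pq with h | h
        · rw [h] at hx₀z; exact (mul_ne_zero sp1 sp2) hx₀z
        · rw [h] at hx₀z; exact (mul_ne_zero sq1 sq2) hx₀z
      constructor
      · intro h; exact hcore (by rw [h]; ring)
      · intro h; exact hcore (by rw [h]; ring)
    have hanti := strictAntiOn_Gfun hα hppos (fun w hw => (hnz w hw).1)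
      (fun w hw => (hnz w hw).2)
    have hlt := hanti (Set.left_mem_Icc.2 hpq.le) (Set.right_mem_Icc.2 hpq.le) hpq
    rw [hGp, hGq] at hlt
    exact lt_irrefl _ hlt

lemma roots_unique {α β : ℝ} (hα : α ∈ Set.Ioo (0:ℝ) 1) (hβ : 0 ≤ β) {k : ℕ} (hk : 1 ≤ k)
    {x y : ℝ} (hx : x ∈ Set.Ico (Real.pi*k) (Real.pi*(k+1)))
    (hy : y ∈ Set.Ico (Real.pi*k) (Real.pi*(k+1)))
    (hgx : gfun α β x = 0) (hgy : gfun α β y = 0) : x = y := by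
  have hπ := Real.pi_pos
  have hα1 := hα.1
  have h1α : (0:ℝ) < 1-α := by linarith [hα.2]
  have hkpos : (0:ℝ) < k := by exact_mod_cast hk
  have hA0 : 0 < Real.pi*(k:ℝ) := by positivity
  by_cases hβ0 : β = 0
  · subst hβ0
    have key : ∀ z ∈ Set.Ico (Real.pi*(k:ℝ)) (Real.pi*((k:ℝ)+1)), gfun α 0 z = 0 →
        z = Real.pi*(k:ℝ) := by
      intro z hz hgz
      simp only [gfun, zero_mul, add_zero] at hgz
      have hzpos : 0 < z := lt_of_lt_of_le hA0 hz.1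
      rcases mul_eq_zero.1 hgz with h | h
      · exact absurd h (ne_of_gt hzpos)
      · exact sin_root_endpoint hz h
    rw [key x hx hgx, key y hy hgy]
  · have hβpos : 0 < β := lt_of_le_of_ne hβ (Ne.symm hβ0)
    by_cases hsk : Real.sin (α*(Real.pi*k)) = 0
    · have hnz := zero_none hα hsk
      have key : ∀ z ∈ Set.Ico (Real.pi*(k:ℝ)) (Real.pi*((k:ℝ)+1)), gfun α β z = 0 →
          z = Real.pi*(k:ℝ) := by
        intro z hz hgz
        by_contra hzne
        have hz1 : Real.pi*(k:ℝ) < z := lt_of_le_of_ne hz.1 (Ne.symm hzne)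
        have hGz : Gfun α z = -β := Groot hz1 hz.2 hgz
        have hzpos : 0 < z := lt_trans hA0 hz1
        have hanti := strictAntiOn_Gfun hα hzpos
          (fun w hw => (hnz w ⟨lt_of_lt_of_le hz1 hw.1, hw.2⟩).1)
          (fun w hw => (hnz w ⟨lt_of_lt_of_le hz1 hw.1, hw.2⟩).2)
        have hAB : Real.pi*(k:ℝ) < Real.pi*((k:ℝ)+1) := by nlinarith
        have hGB : Gfun α (Real.pi*((k:ℝ)+1)) = 0 := by
          apply Gfun_zero
          · rw [show Real.pi*((k:ℝ)+1) = ((k+1:ℕ):ℝ)*Real.pi by push_cast; ring]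
            exact Real.sin_nat_mul_pi (k+1)
          · exact (hnz _ ⟨hAB, le_refl _⟩).1
          · exact (hnz _ ⟨hAB, le_refl _⟩).2
        have hlt := hanti (Set.left_mem_Icc.2 hz.2.le) (Set.right_mem_Icc.2 hz.2.le) hz.2
        rw [hGB, hGz] at hlt
        linarith
      rw [key x hx hgx, key y hy hgy]
    · have hAnot : gfun α β (Real.pi*(k:ℝ)) ≠ 0 := by
        rw [g_at_A]
        have hsp : 0 < Real.sin (α*(Real.pi*(k:ℝ)))^2 :=
          lt_of_le_of_ne (sq_nonneg _) (Ne.symm (pow_ne_zero 2 hsk))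
        have hpne : ((-1:ℝ)^k) ≠ 0 := pow_ne_zero _ (by norm_num)
        intro h
        rcases mul_eq_zero.1 h with h' | h'
        · rcases mul_eq_zero.1 h' with h'' | h''
          · exact hpne (neg_eq_zero.1 h'')
          · exact hβ0 h''
        · exact hsp.ne' h'
      have hx1 : Real.pi*(k:ℝ) < x :=
        lt_of_le_of_ne hx.1 (by intro h; exact hAnot (by rw [h]; exact hgx))
      have hy1 : Real.pi*(k:ℝ) < y :=
        lt_of_le_of_ne hy.1 (by intro h; exact hAnot (by rw [h]; exact hgy))
      obtain ⟨x₀, hx₀mem, hx₀z⟩ := zero_exists hα hsk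
      rcases lt_trichotomy x y with h | h | h
      · exact (no_two_roots hα hβ hk hx₀mem hx₀z hx1 hy.2 h hgx hgy).elim
      · exact h
      · exact (no_two_roots hα hβ hk hx₀mem hx₀z hy1 hx.2 h hgy hgx).elim

theorem basic_problem_unique_eigenvalue
    (α β : ℝ) (hα : α ∈ Set.Ioo (0:ℝ) 1) (hβ : 0 ≤ β) (k : ℕ) (hk : 1 ≤ k) :
    ∃! lam : ℝ,
      lam ∈ Set.Ico (Real.pi^2 * k^2) (Real.pi^2 * (k + 1)^2) ∧
      Real.sqrt lam * Real.sin (Real.sqrt lam) =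
        -β * Real.sin (Real.sqrt lam * α) * Real.sin (Real.sqrt lam * (1 - α)) := by
  have hπ := Real.pi_pos
  have hkpos : (0:ℝ) < k := by exact_mod_cast hk
  have hA0 : (0:ℝ) ≤ Real.pi*k := by positivity
  obtain ⟨x, hxmem, hgx⟩ := exists_root hα hβ hk
  have hx0 : 0 ≤ x := le_trans hA0 hxmem.1
  have hsq : Real.sqrt (x^2) = x := Real.sqrt_sq hx0
  refine ⟨x^2, ⟨⟨?_, ?_⟩, ?_⟩, ?_⟩
  · nlinarith [hxmem.1]
  · nlinarith [hxmem.2]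
  · rw [hsq, mul_comm x α, mul_comm x (1-α)]
    simp only [gfun] at hgx
    linear_combination hgx
  · rintro lam' ⟨⟨h1, h2⟩, heq⟩
    have hlam0 : 0 ≤ lam' := le_trans (by positivity) h1
    set y := Real.sqrt lam' with hy
    have hy0 : 0 ≤ y := Real.sqrt_nonneg _
    have hysq : y^2 = lam' := Real.sq_sqrt hlam0
    have hy1 : Real.pi*(k:ℝ) ≤ y := by
      have hle : (Real.pi*(k:ℝ))^2 ≤ lam' := by nlinarith [h1]
      have := Real.sqrt_le_sqrt hle
      rwa [Real.sqrt_sq hA0] at this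
    have hy2 : y < Real.pi*((k:ℝ)+1) := by
      by_contra hc
      push_neg at hc
      have : (Real.pi*((k:ℝ)+1))^2 ≤ y^2 := by
        apply pow_le_pow_left₀ (by positivity) hc
      nlinarith [h2, hysq]
    have hgy : gfun α β y = 0 := by
      rw [mul_comm y α, mul_comm y (1-α)] at heq
      simp only [gfun]
      linear_combination heq
    have hyx : y = x := roots_unique hα hβ hk ⟨hy1, hy2⟩ hxmem hgy hgx
    rw [← hysq, hyx]
end

section
/- Let λ₀ > 0, α ∈ (0,1), β ≥ 0, c₀ ∈ ℝ satisfy the matching equations of the basic problem, and let u₀(x) = sin(√λ₀ x)/√λ₀ for x ∈ [0,α] and u₀(x) = c₀ sin(√λ₀(1-x)) for x ∈ (α,1]. Then ∫₀¹ u₀(x)² dx = (1/2)·(α/λ₀ + c₀²(1-α) + β·sin²(√λ₀α)/λ₀²). -/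
open Real MeasureTheory

theorem norm_sq_of_basic_eigenfunction
    (lam0 α β c0 : ℝ) (hlam : 0 < lam0) (hα : α ∈ Set.Ioo (0:ℝ) 1) (hβ : 0 ≤ β)
    (h1 : Real.sin (Real.sqrt lam0 * α) / Real.sqrt lam0 =
      c0 * Real.sin (Real.sqrt lam0 * (1 - α)))
    (h2 : -c0 * Real.sqrt lam0 * Real.cos (Real.sqrt lam0 * (1 - α)) -
        Real.cos (Real.sqrt lam0 * α) =
      β * Real.sin (Real.sqrt lam0 * α) / Real.sqrt lam0)
    (u0 : ℝ → ℝ)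
    (hu0 : ∀ x, u0 x = if x ≤ α then Real.sin (Real.sqrt lam0 * x) / Real.sqrt lam0
      else c0 * Real.sin (Real.sqrt lam0 * (1 - x))) :
    ∫ x in (0:ℝ)..1, (u0 x)^2 =
      (1/2) * (α / lam0 + c0^2 * (1 - α) +
        β * (Real.sin (Real.sqrt lam0 * α))^2 / lam0^2) := by
  obtain ⟨hα0, hα1⟩ := hα
  set s := Real.sqrt lam0 with hsdef
  have hs0 : 0 < s := Real.sqrt_pos.mpr hlam
  have hs : s ≠ 0 := hs0.ne'
  have hs2 : s ^ 2 = lam0 := Real.sq_sqrt hlam.le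
  set f : ℝ → ℝ := fun x => (Real.sin (s * x) / s) ^ 2 with hf
  set g : ℝ → ℝ := fun x => (c0 * Real.sin (s * (1 - x))) ^ 2 with hg
  have hfc : Continuous f := by fun_prop
  have hgc : Continuous g := by fun_prop
  have hEf : Set.EqOn (fun x => (u0 x)^2) f (Set.uIcc 0 α) := by
    intro x hx
    rw [Set.uIcc_of_le hα0.le] at hx
    simp only [hu0 x, hf, if_pos hx.2]
  have hEg : Set.EqOn (fun x => (u0 x)^2) g (Set.uIcc α 1) := by
    intro x hx
    rw [Set.uIcc_of_le hα1.le] at hx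
    simp only [hu0 x]
    rcases eq_or_lt_of_le hx.1 with h | h
    · rw [if_pos h.symm.le, ← h, h1]
    · rw [if_neg (not_le.mpr h)]
  have hI1 : IntervalIntegrable (fun x => (u0 x)^2) volume 0 α :=
    (hfc.intervalIntegrable 0 α).congr
      (fun x hx => (hEf (Set.uIoc_subset_uIcc hx)).symm)
  have hI2 : IntervalIntegrable (fun x => (u0 x)^2) volume α 1 :=
    (hgc.intervalIntegrable α 1).congr
      (fun x hx => (hEg (Set.uIoc_subset_uIcc hx)).symm)
  rw [← intervalIntegral.integral_add_adjacent_intervals hI1 hI2,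
    intervalIntegral.integral_congr hEf, intervalIntegral.integral_congr hEg]
  have hsin : ∀ a b : ℝ, ∫ x in a..b, Real.sin (s * x) ^ 2 =
      s⁻¹ * ((Real.sin (s*a) * Real.cos (s*a) - Real.sin (s*b) * Real.cos (s*b) + s*b - s*a) / 2) := by
    intro a b
    have h := intervalIntegral.integral_comp_mul_left (a := a) (b := b)
      (fun y => Real.sin y ^ 2) hs
    simp only [integral_sin_sq, smul_eq_mul] at h
    exact h
  have hA : ∫ x in (0:ℝ)..α, f x =
      s⁻¹ * s⁻¹ * s⁻¹ * ((- (Real.sin (s*α) * Real.cos (s*α)) + s*α) / 2) := by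
    have he : ∀ x, f x = s⁻¹ * s⁻¹ * Real.sin (s * x) ^ 2 := by
      intro x; simp [hf, div_pow]; ring
    simp_rw [he]
    rw [intervalIntegral.integral_const_mul, hsin]
    simp; ring
  have hB : ∫ x in α..(1:ℝ), g x = c0^2 * s⁻¹ *
      ((- (Real.sin (s*(1-α)) * Real.cos (s*(1-α))) + s*(1-α)) / 2) := by
    have he : ∀ x, g x = c0^2 * Real.sin (s * (1 - x)) ^ 2 := by
      intro x; simp [hg]; ring
    simp_rw [he]
    rw [intervalIntegral.integral_const_mul, intervalIntegral.integral_comp_sub_left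
      (fun y => Real.sin (s * y) ^ 2) 1, hsin]
    simp; ring
  rw [hA, hB, ← hs2]
  have h1' : Real.sin (s * α) = s * (c0 * Real.sin (s * (1 - α))) := by
    field_simp at h1; linarith [h1]
  have h2' : (-(c0 * s * Real.cos (s * (1 - α))) - Real.cos (s * α)) * s
      = β * Real.sin (s * α) := by
    field_simp at h2; linarith [h2]
  have key : s^3 * (c0^2 * (Real.sin (s*(1-α)) * Real.cos (s*(1-α)))) =
      - (s * (Real.sin (s*α) * Real.cos (s*α))) - β * Real.sin (s*α)^2 := by
    linear_combination (-(c0 * s^2 * Real.cos (s*(1-α)))) * h1' - Real.sin (s*α) * h2'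
  field_simp
  linear_combination (-1 : ℝ) * key
end

section
/- For every integer j ≥ 2, the coefficient αⱼ = (2j-3)!!/(2·(2j)!!) satisfies αⱼ < e^{1/(24j)}/(2(2j-1)√(πj)) ≤ 1/((2j-1)√(πj)). -/
open Real Nat

lemma cb_sq_lt (n : ℕ) : (Nat.centralBinom n : ℝ)^2 * (Real.pi * n) < 16 ^ n := by
  have hW := Real.Wallis.le_W n
  have hWeq := Real.Wallis.W_eq_factorial_ratio n
  have hfac : (Nat.centralBinom n) * (n ! * n !) = (2*n)! := by
    have h := Nat.choose_mul_factorial_mul_factorial (show n ≤ 2*n by omega)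
    have h2 : 2*n - n = n := by omega
    rw [h2] at h
    simpa [Nat.centralBinom, mul_assoc] using h
  have hfacR : (Nat.centralBinom n : ℝ) * ((n ! : ℝ) * n !) = ((2*n)! : ℝ) := by
    exact_mod_cast congrArg (Nat.cast : ℕ → ℝ) hfac
  have hfne : ((n ! : ℝ)) ≠ 0 := by positivity
  have hWval : Real.Wallis.W n = 2^(4*n) / ((Nat.centralBinom n : ℝ)^2 * (2*n+1)) := by
    rw [hWeq, ← hfacR]
    have hcb : (0:ℝ) < Nat.centralBinom n := by exact_mod_cast Nat.centralBinom_pos n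
    field_simp
  rw [hWval] at hW
  have hcb : (0:ℝ) < Nat.centralBinom n := by exact_mod_cast Nat.centralBinom_pos n
  have h16 : ((16:ℝ)) ^ n = 2 ^ (4*n) := by
    rw [show (16:ℝ) = 2^4 by norm_num, ← pow_mul]
  rw [h16]
  rw [div_mul_eq_mul_div, div_le_div_iff₀ (by positivity) (by positivity)] at hW
  have hc2 : (0:ℝ) < (Nat.centralBinom n : ℝ)^2 := by positivity
  have hππ : (0:ℝ) < Real.pi := Real.pi_pos
  have hn0 : (0:ℝ) ≤ (n:ℝ) := Nat.cast_nonneg n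
  nlinarith [mul_pos hππ hc2, mul_nonneg (mul_pos hππ hc2).le hn0]

lemma cb_lt (n : ℕ) (h : (Nat.centralBinom n : ℝ)^2 * (Real.pi * n) < 16 ^ n) :
    (Nat.centralBinom n : ℝ) * Real.sqrt (Real.pi * n) < 4 ^ n := by
  have hsq : ((Nat.centralBinom n : ℝ) * Real.sqrt (Real.pi * n))^2 < ((4:ℝ)^n)^2 := by
    rw [mul_pow, Real.sq_sqrt (by positivity)]
    calc (Nat.centralBinom n : ℝ)^2 * (Real.pi * n) < 16^n := h
      _ = ((4:ℝ)^n)^2 := by rw [← pow_mul, pow_mul']; norm_num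
  exact lt_of_pow_lt_pow_left₀ 2 (by positivity) hsq

lemma lhs_eq (k : ℕ) : ((2*k+1)‼ : ℝ) / (2 * ((2*(k+2))‼ : ℝ)) =
    (Nat.centralBinom (k+2) : ℝ) / (2 * (2*(k:ℝ)+3) * 4^(k+2)) := by
  have h1 : ((2*k+1)! : ℕ) = (2*k+1)‼ * (2*k)‼ := Nat.factorial_eq_mul_doubleFactorial (2*k)
  have h2 : ((2*k)‼ : ℕ) = 2^k * k ! := Nat.doubleFactorial_two_mul k
  have h3 : ((2*(k+2))‼ : ℕ) = 2^(k+2) * (k+2)! := Nat.doubleFactorial_two_mul (k+2)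
  have h4 : (Nat.centralBinom (k+2)) * ((k+2)! * (k+2)!) = (2*(k+2))! := by
    have h := Nat.choose_mul_factorial_mul_factorial (show k+2 ≤ 2*(k+2) by omega)
    have h2' : 2*(k+2) - (k+2) = k+2 := by omega
    rw [h2'] at h
    simpa [Nat.centralBinom, mul_assoc] using h
  have h5 : ((2*(k+2))! : ℕ) = (2*k+4) * ((2*k+3) * ((2*k+2) * (2*k+1)!)) := by
    rw [show 2*(k+2) = (2*k+3)+1 by omega, Nat.factorial_succ,
        show (2*k+3) = (2*k+2)+1 by omega, Nat.factorial_succ,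
        show (2*k+2) = (2*k+1)+1 by omega, Nat.factorial_succ]
  have h6 : ((k+2)! : ℕ) = (k+2) * ((k+1) * k !) := by
    rw [show k+2 = (k+1)+1 by omega, Nat.factorial_succ, Nat.factorial_succ]
  -- cast to real
  have hA : ((2*k+1)‼ : ℝ) = ((2*k+1)! : ℝ) / (2^k * (k ! : ℝ)) := by
    rw [eq_div_iff (by positivity)]
    push_cast [h1, h2]
    ring
  have hC : (Nat.centralBinom (k+2) : ℝ) = ((2*(k+2))! : ℝ) / (((k+2)! : ℝ) * ((k+2)! : ℝ)) := by
    rw [eq_div_iff (by positivity)]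
    exact_mod_cast congrArg (Nat.cast : ℕ → ℝ) h4
  have hD : ((2*(k+2))‼ : ℝ) = 2^(k+2) * ((k+2)! : ℝ) := by exact_mod_cast congrArg (Nat.cast : ℕ → ℝ) h3
  have hY : ((2*(k+2))! : ℝ) = (2*(k:ℝ)+4) * ((2*(k:ℝ)+3) * ((2*(k:ℝ)+2) * ((2*k+1)! : ℝ))) := by
    exact_mod_cast congrArg (Nat.cast : ℕ → ℝ) h5
  have hG : ((k+2)! : ℝ) = ((k:ℝ)+2) * (((k:ℝ)+1) * (k ! : ℝ)) := by
    exact_mod_cast congrArg (Nat.cast : ℕ → ℝ) h6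
  rw [hA, hC, hD, hY, hG]
  have hp : (4:ℝ)^(k+2) = 2^(k+2) * 2^(k+2) := by
    rw [← mul_pow]; norm_num
  have hq : (2:ℝ)^(k+2) = 4 * 2^k := by ring
  rw [hp, hq]
  have hf : (0:ℝ) < (k ! : ℝ) := by positivity
  have hx : (0:ℝ) < ((2*k+1)! : ℝ) := by positivity
  have h2k : (0:ℝ) < (2:ℝ)^k := by positivity
  field_simp
  ring

theorem alpha_j_stirling_bound (j : ℕ) (hj : 2 ≤ j) :
    ((2 * j - 3)‼ : ℝ) / (2 * (2 * j)‼) <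
      Real.exp (1 / (24 * j)) / (2 * (2 * j - 1) * Real.sqrt (Real.pi * j)) ∧
    Real.exp (1 / (24 * j)) / (2 * (2 * j - 1) * Real.sqrt (Real.pi * j)) ≤
      1 / ((2 * j - 1) * Real.sqrt (Real.pi * j)) := by
  obtain ⟨k, rfl⟩ : ∃ k, j = k + 2 := ⟨j - 2, by omega⟩
  have hidx : 2 * (k + 2) - 3 = 2 * k + 1 := by omega
  rw [hidx]
  push_cast
  rw [show 2*((k:ℝ)+2)-1 = 2*(k:ℝ)+3 from by ring]
  have hsqrt : (0:ℝ) < Real.sqrt (Real.pi * ((k:ℝ)+2)) := by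
    apply Real.sqrt_pos.mpr; positivity
  have hE1 : 1 ≤ Real.exp (1 / (24 * ((k:ℝ)+2))) := Real.one_le_exp (by positivity)
  have hcb : (Nat.centralBinom (k+2) : ℝ) * Real.sqrt (Real.pi * ((k:ℝ)+2)) < 4^(k+2) := by
    have h := cb_lt (k+2) (cb_sq_lt (k+2))
    push_cast at h
    exact h
  constructor
  · rw [lhs_eq k]
    rw [div_lt_div_iff₀ (by positivity) (by positivity)]
    have c2 : (4:ℝ)^(k+2) ≤ Real.exp (1 / (24 * ((k:ℝ)+2))) * 4^(k+2) :=
      le_mul_of_one_le_left (by positivity) hE1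
    have key := lt_of_lt_of_le hcb c2
    have hpos : (0:ℝ) < 2*(2*(k:ℝ)+3) := by positivity
    nlinarith [mul_lt_mul_of_pos_left key hpos]
  · rw [div_le_div_iff₀ (by positivity) (by positivity)]
    have hE2 : Real.exp (1 / (24 * ((k:ℝ)+2))) ≤ 2 := by
      have h48 : (1:ℝ) / (24 * ((k:ℝ)+2)) ≤ 1/48 := by
        rw [div_le_div_iff₀ (by positivity) (by norm_num)]
        linarith [Nat.cast_nonneg (α := ℝ) k]
      have hlog : (1:ℝ) / (24 * ((k:ℝ)+2)) ≤ Real.log 2 := by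
        linarith [Real.log_two_gt_d9]
      calc Real.exp (1 / (24 * ((k:ℝ)+2))) ≤ Real.exp (Real.log 2) := Real.exp_le_exp.mpr hlog
        _ = 2 := Real.exp_log (by norm_num)
    have hD : (0:ℝ) < (2*(k:ℝ)+3) * Real.sqrt (Real.pi * ((k:ℝ)+2)) := by positivity
    nlinarith [mul_le_mul_of_nonneg_right hE2 hD.le]
end
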